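/- arXiv:1201.6538 — 2 statements merged into one kernel-verified Lean document; each statement's English description precedes it below -/
import Mathlib

section
/- For all nonnegative integers i, complex parameters α, β, and complex numbers x, y, the convolution identity Σ_{j=0}^{i} L_{i-j}^{(α)}(x) · L_j^{(β)}(y) = L_i^{(α+β+1)}(x+y) holds. -/
open Finset

/-- Generalized binomial coefficient C(x, k) = x(x-1)⋯(x-k+1)/k!. -/
noncomputable def gbinom (x : ℂ) (k : ℕ) : ℂ :=
  (∏ j ∈ Finset.range k, (x - j)) / (k.factorial : ℂ)

/-- Generalized Laguerre polynomial L_i^{(α)}(z) = Σ_{j=0}^i (-1)^j C(i+α, i-j) z^j / j!. -/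
noncomputable def lag (i : ℕ) (α z : ℂ) : ℂ :=
  ∑ j ∈ Finset.range (i + 1), (-1 : ℂ) ^ j * gbinom ((i : ℂ) + α) (i - j) * z ^ j / (j.factorial : ℂ)

lemma descPoch_smeval (x : ℂ) (k : ℕ) :
    (descPochhammer ℤ k).smeval x = ∏ j ∈ Finset.range k, (x - j) := by
  induction k with
  | zero => simp [descPochhammer_zero, Polynomial.smeval_one]
  | succ n ih =>
    rw [descPochhammer_succ_right, Polynomial.smeval_mul, ih, Finset.prod_range_succ]
    congr 1
    simp [Polynomial.smeval_sub, Polynomial.smeval_X, Polynomial.smeval_natCast]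

lemma gbinom_eq_choose (x : ℂ) (k : ℕ) : gbinom x k = Ring.choose x k := by
  have h := Ring.descPochhammer_eq_factorial_smul_choose x k
  rw [descPoch_smeval] at h
  rw [gbinom, h, nsmul_eq_mul]
  have : (k.factorial : ℂ) ≠ 0 := by exact_mod_cast Nat.factorial_ne_zero k
  field_simp

lemma gbinom_add (r s : ℂ) (k : ℕ) :
    gbinom (r + s) k = ∑ t ∈ Finset.range (k + 1), gbinom r t * gbinom s (k - t) := by
  simp only [gbinom_eq_choose]
  rw [Ring.add_choose_eq k (mul_comm r s), Finset.Nat.sum_antidiagonal_eq_sum_range_succ_mk]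

lemma gbinom_neg (w : ℂ) (n : ℕ) : gbinom (w + n) n = (-1 : ℂ) ^ n * gbinom (-w - 1) n := by
  unfold gbinom
  rw [← Finset.prod_range_reflect (fun j => (w + n - j))]
  rw [← mul_div_assoc]
  congr 1
  have : ∏ j ∈ Finset.range n, (w + (n:ℂ) - ((n - 1 - j : ℕ) : ℂ))
      = ∏ j ∈ Finset.range n, (-1 : ℂ) * (-w - 1 - j) := by
    apply Finset.prod_congr rfl
    intro j hj
    simp only [Finset.mem_range] at hj
    have h2 : ((n - 1 - j : ℕ) : ℂ) = (n : ℂ) - 1 - j := by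
      push_cast [Nat.cast_sub (by omega : j ≤ n - 1), Nat.cast_sub (by omega : 1 ≤ n)]
      ring
    rw [h2]; ring
  rw [this, Finset.prod_mul_distrib, Finset.prod_const, Finset.card_range]

lemma key (m : ℕ) (u v : ℂ) :
    ∑ t ∈ Finset.range (m + 1), gbinom (u + ((m - t : ℕ) : ℂ)) (m - t) * gbinom (v + t) t
      = gbinom (u + v + m + 1) m := by
  have hrhs : gbinom (u + v + m + 1) m = (-1 : ℂ) ^ m * gbinom (-v - 1 + (-u - 1)) m := by
    have : u + v + (m : ℂ) + 1 = (u + v + 1) + m := by ring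
    rw [this, gbinom_neg]
    congr 2
    ring
  rw [hrhs, gbinom_add, Finset.mul_sum]
  apply Finset.sum_congr rfl
  intro t ht
  simp only [Finset.mem_range] at ht
  rw [gbinom_neg, gbinom_neg]
  have : (-1 : ℂ) ^ (m - t) * (-1 : ℂ) ^ t = (-1 : ℂ) ^ m := by
    rw [← pow_add, Nat.sub_add_cancel (by omega)]
  ring_nf
  rw [mul_assoc, this]

lemma tri1 {M : Type*} [AddCommMonoid M] (n : ℕ) (f : ℕ → ℕ → M) :
    ∑ k ∈ Finset.range (n + 1), ∑ a ∈ Finset.range (k + 1), f k a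
      = ∑ a ∈ Finset.range (n + 1), ∑ t ∈ Finset.range (n - a + 1), f (a + t) a := by
  rw [Finset.sum_sigma', Finset.sum_sigma']
  refine Finset.sum_nbij' (fun p => ⟨p.2, p.1 - p.2⟩) (fun q => ⟨q.1 + q.2, q.1⟩) ?_ ?_ ?_ ?_ ?_
  · rintro ⟨k, a⟩ h
    simp only [Finset.mem_sigma, Finset.mem_range] at h ⊢
    omega
  · rintro ⟨a, t⟩ h
    simp only [Finset.mem_sigma, Finset.mem_range] at h ⊢
    omega
  · rintro ⟨k, a⟩ h
    simp only [Finset.mem_sigma, Finset.mem_range] at h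
    have : a + (k - a) = k := by omega
    simp [this]
  · rintro ⟨a, t⟩ h
    simp only [Finset.mem_sigma, Finset.mem_range] at h
    simp
  · rintro ⟨k, a⟩ h
    simp only [Finset.mem_sigma, Finset.mem_range] at h
    simp only
    congr 1
    omega

lemma tri2 {M : Type*} [AddCommMonoid M] (n : ℕ) (f : ℕ → ℕ → M) :
    ∑ j ∈ Finset.range (n + 1), ∑ a ∈ Finset.range (n - j + 1), f j a
      = ∑ a ∈ Finset.range (n + 1), ∑ j ∈ Finset.range (n - a + 1), f j a := by
  rw [Finset.sum_sigma', Finset.sum_sigma']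
  refine Finset.sum_nbij' (fun p => ⟨p.2, p.1⟩) (fun q => ⟨q.2, q.1⟩) ?_ ?_ ?_ ?_ ?_
  · rintro ⟨j, a⟩ h
    simp only [Finset.mem_sigma, Finset.mem_range] at h ⊢
    omega
  · rintro ⟨a, j⟩ h
    simp only [Finset.mem_sigma, Finset.mem_range] at h ⊢
    omega
  · rintro ⟨j, a⟩ _; rfl
  · rintro ⟨a, j⟩ _; rfl
  · rintro ⟨j, a⟩ _; rfl

lemma lag_rhs_eq (i : ℕ) (α β x y : ℂ) :
    lag i (α + β + 1) (x + y)
      = ∑ a ∈ Finset.range (i + 1), ∑ b ∈ Finset.range (i - a + 1),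
          (-1 : ℂ) ^ (a + b) * gbinom ((i : ℂ) + α + β + 1) (i - (a + b)) * x ^ a * y ^ b /
            ((a.factorial : ℂ) * (b.factorial : ℂ)) := by
  rw [lag]
  have : ∀ k ∈ Finset.range (i + 1),
      (-1 : ℂ) ^ k * gbinom ((i : ℂ) + (α + β + 1)) (i - k) * (x + y) ^ k / (k.factorial : ℂ)
        = ∑ a ∈ Finset.range (k + 1),
          (-1 : ℂ) ^ k * gbinom ((i : ℂ) + α + β + 1) (i - k) *
            (x ^ a * y ^ (k - a) * (k.choose a : ℂ)) / (k.factorial : ℂ) := by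
    intro k _
    rw [add_pow, Finset.mul_sum, Finset.sum_div]
    congr 1
    ext a
    ring_nf
  rw [Finset.sum_congr rfl this, tri1]
  apply Finset.sum_congr rfl
  intro a _
  apply Finset.sum_congr rfl
  intro b _
  simp only [Nat.add_sub_cancel_left]
  have hfac : ((a + b).choose a : ℂ) / ((a + b).factorial : ℂ)
      = 1 / ((a.factorial : ℂ) * (b.factorial : ℂ)) := by
    have h1 : (a + b).choose a * a.factorial * b.factorial = (a + b).factorial := by
      have := Nat.choose_mul_factorial_mul_factorial (Nat.le_add_right a b)
      simpa [Nat.add_sub_cancel_left] using this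
    have h2 : ((a + b).factorial : ℂ) ≠ 0 := by exact_mod_cast Nat.factorial_ne_zero _
    have h3 : (a.factorial : ℂ) * (b.factorial : ℂ) ≠ 0 := by
      refine mul_ne_zero ?_ ?_ <;> exact_mod_cast Nat.factorial_ne_zero _
    rw [div_eq_div_iff h2 h3, one_mul]
    push_cast [← h1]
    ring
  calc (-1 : ℂ) ^ (a + b) * gbinom ((i : ℂ) + α + β + 1) (i - (a + b)) *
        (x ^ a * y ^ b * ((a + b).choose a : ℂ)) / ((a + b).factorial : ℂ)
      = (-1 : ℂ) ^ (a + b) * gbinom ((i : ℂ) + α + β + 1) (i - (a + b)) * x ^ a * y ^ b *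
        (((a + b).choose a : ℂ) / ((a + b).factorial : ℂ)) := by ring
    _ = _ := by rw [hfac]; ring

lemma lag_lhs_eq (i : ℕ) (α β x y : ℂ) :
    ∑ j ∈ Finset.range (i + 1), lag (i - j) α x * lag j β y
      = ∑ b ∈ Finset.range (i + 1), ∑ a ∈ Finset.range (i - b + 1),
          (-1 : ℂ) ^ (a + b) * gbinom ((i : ℂ) + α + β + 1) (i - (a + b)) * x ^ a * y ^ b /
            ((a.factorial : ℂ) * (b.factorial : ℂ)) := by
  have step1 : ∑ j ∈ Finset.range (i + 1), lag (i - j) α x * lag j β y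
      = ∑ j ∈ Finset.range (i + 1), ∑ b ∈ Finset.range (j + 1),
          lag (i - j) α x *
            ((-1 : ℂ) ^ b * gbinom ((j : ℂ) + β) (j - b) * y ^ b / (b.factorial : ℂ)) := by
    apply Finset.sum_congr rfl
    intro j _
    rw [show lag j β y = ∑ b ∈ Finset.range (j + 1),
      (-1 : ℂ) ^ b * gbinom ((j : ℂ) + β) (j - b) * y ^ b / (b.factorial : ℂ) from rfl,
      Finset.mul_sum]
  rw [step1, tri1 i (fun j b => lag (i - j) α x *
    ((-1 : ℂ) ^ b * gbinom ((j : ℂ) + β) (j - b) * y ^ b / (b.factorial : ℂ)))]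
  apply Finset.sum_congr rfl
  intro b hb
  simp only [Nat.add_sub_cancel_left]
  have step2 : ∀ t ∈ Finset.range (i - b + 1),
      lag (i - (b + t)) α x *
        ((-1 : ℂ) ^ b * gbinom (((b + t : ℕ) : ℂ) + β) t * y ^ b / (b.factorial : ℂ))
      = ∑ a ∈ Finset.range ((i - b) - t + 1),
          ((-1 : ℂ) ^ a * gbinom (((i - b - t : ℕ) : ℂ) + α) (i - b - t - a) * x ^ a /
              (a.factorial : ℂ)) *
            ((-1 : ℂ) ^ b * gbinom (((b + t : ℕ) : ℂ) + β) t * y ^ b / (b.factorial : ℂ)) := by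
    intro t _
    have hsub : i - (b + t) = i - b - t := by omega
    rw [show lag (i - (b + t)) α x = ∑ a ∈ Finset.range ((i - (b + t)) + 1),
      (-1 : ℂ) ^ a * gbinom (((i - (b + t) : ℕ) : ℂ) + α) ((i - (b + t)) - a) * x ^ a /
        (a.factorial : ℂ) from rfl, hsub, Finset.sum_mul]
  rw [Finset.sum_congr rfl step2,
    tri2 (i - b) (fun t a =>
      ((-1 : ℂ) ^ a * gbinom (((i - b - t : ℕ) : ℂ) + α) (i - b - t - a) * x ^ a /
          (a.factorial : ℂ)) *
        ((-1 : ℂ) ^ b * gbinom (((b + t : ℕ) : ℂ) + β) t * y ^ b / (b.factorial : ℂ)))]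
  apply Finset.sum_congr rfl
  intro a ha
  simp only [Finset.mem_range] at hb ha
  set m := i - b - a with hm
  have hterm : ∀ t ∈ Finset.range (m + 1),
      ((-1 : ℂ) ^ a * gbinom (((i - b - t : ℕ) : ℂ) + α) (i - b - t - a) * x ^ a /
          (a.factorial : ℂ)) *
        ((-1 : ℂ) ^ b * gbinom (((b + t : ℕ) : ℂ) + β) t * y ^ b / (b.factorial : ℂ))
      = ((-1 : ℂ) ^ (a + b) * x ^ a * y ^ b / ((a.factorial : ℂ) * (b.factorial : ℂ))) *
          (gbinom (((a : ℂ) + α) + ((m - t : ℕ) : ℂ)) (m - t) *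
            gbinom (((b : ℂ) + β) + (t : ℂ)) t) := by
    intro t ht
    simp only [Finset.mem_range] at ht
    have e2 : i - b - t - a = m - t := by omega
    have e1 : i - b - t = a + (m - t) := by omega
    rw [e2, e1]
    push_cast
    ring_nf
  rw [Finset.sum_congr rfl hterm, ← Finset.mul_sum, key m ((a : ℂ) + α) ((b : ℂ) + β)]
  have harg : ((a : ℂ) + α) + ((b : ℂ) + β) + (m : ℂ) + 1 = (i : ℂ) + α + β + 1 := by
    have hm2 : a + b + m = i := by omega
    have := congrArg (fun n : ℕ => (n : ℂ)) hm2
    push_cast at this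
    linear_combination this
  rw [harg, show m = i - (a + b) from by omega]
  ring

theorem laguerre_convolution (i : ℕ) (α β x y : ℂ) :
    ∑ j ∈ Finset.range (i + 1), lag (i - j) α x * lag j β y = lag i (α + β + 1) (x + y) := by
  rw [lag_lhs_eq i α β x y, lag_rhs_eq i α β x y,
    tri2 i (fun b a =>
      (-1 : ℂ) ^ (a + b) * gbinom ((i : ℂ) + α + β + 1) (i - (a + b)) * x ^ a * y ^ b /
        ((a.factorial : ℂ) * (b.factorial : ℂ)))]
end

section
/- Define sequences q_k(s,z) by q_{-1} = 0, q_0 = 1 and q_k = (k/2 - s) q_{k-2} + q_{k-1} for even k ≥ 2, q_k = ((k-1)/2) q_{k-2} + z · q_{k-1} for odd k ≥ 1. Then for every nonnegative integer k, q_{2k}(s,z) = k! · L_k^{(-s)}(-z) and q_{2k+1}(s,z) = k! · z · L_k^{(1-s)}(-z). -/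
open Finset

lemma gbinom_zero (x : ℂ) : gbinom x 0 = 1 := by simp [gbinom]

lemma prod_shift (y : ℂ) (m : ℕ) :
    ∏ j ∈ Finset.range (m + 1), (y - j) = y * ∏ j ∈ Finset.range m, (y - 1 - j) := by
  rw [Finset.prod_range_succ']
  simp only [Nat.cast_zero, sub_zero, Nat.cast_add, Nat.cast_one]
  rw [mul_comm]
  congr 1
  apply Finset.prod_congr rfl
  intro j _
  ring

lemma gbinom_succ_mul (y : ℂ) (m : ℕ) :
    ((m : ℂ) + 1) * gbinom y (m + 1) = y * gbinom (y - 1) m := by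
  have hm : ((m.factorial : ℂ)) ≠ 0 := Nat.cast_ne_zero.mpr m.factorial_ne_zero
  have hm1 : ((m : ℂ) + 1) ≠ 0 := Nat.cast_add_one_ne_zero m
  rw [gbinom, gbinom, prod_shift, Nat.factorial_succ]
  push_cast
  field_simp

lemma gbinom_pascal (x : ℂ) (m : ℕ) :
    gbinom (x + 1) (m + 1) = gbinom x (m + 1) + gbinom x m := by
  have hm : ((m.factorial : ℂ)) ≠ 0 := Nat.cast_ne_zero.mpr m.factorial_ne_zero
  have hm1 : ((m : ℂ) + 1) ≠ 0 := Nat.cast_add_one_ne_zero m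
  rw [gbinom, gbinom, gbinom, prod_shift, Finset.prod_range_succ, Nat.factorial_succ]
  have : x + 1 - 1 = x := by ring
  rw [this]
  push_cast
  field_simp
  ring

lemma fac_succ_cast (j : ℕ) : (((j+1).factorial : ℕ) : ℂ) = ((j:ℂ)+1) * (j.factorial : ℂ) := by
  rw [Nat.factorial_succ]; push_cast; ring

lemma lag_zero (α w : ℂ) : lag 0 α w = 1 := by
  simp [lag, gbinom_zero]

lemma lagB (k : ℕ) (α w : ℂ) :
    lag (k+1) (α+1) w = lag k (α+1) w + lag (k+1) α w := by
  simp only [lag]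
  push_cast
  have e1 : (k:ℂ) + 1 + (α + 1) = ((k:ℂ) + 1 + α) + 1 := by ring
  have e2 : (k:ℂ) + (α + 1) = (k:ℂ) + 1 + α := by ring
  rw [e1, e2]
  set x : ℂ := (k:ℂ) + 1 + α with hx
  rw [Finset.sum_range_succ
    (f := fun j => (-1:ℂ)^j * gbinom (x+1) (k+1-j) * w^j / (j.factorial : ℂ)),
    Finset.sum_range_succ
    (f := fun j => (-1:ℂ)^j * gbinom x (k+1-j) * w^j / (j.factorial : ℂ))]
  simp only [Nat.sub_self, gbinom_zero]
  have hS : (∑ j ∈ Finset.range (k+1), (-1:ℂ)^j * gbinom (x+1) (k+1-j) * w^j / (j.factorial : ℂ))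
      = ∑ j ∈ Finset.range (k+1), ((-1:ℂ)^j * gbinom x (k-j) * w^j / (j.factorial : ℂ)
        + (-1:ℂ)^j * gbinom x (k+1-j) * w^j / (j.factorial : ℂ)) := by
    refine Finset.sum_congr rfl ?_
    intro j hj
    have hj' : j ≤ k := Nat.lt_succ_iff.mp (Finset.mem_range.mp hj)
    have h2 : k + 1 - j = (k - j) + 1 := by omega
    rw [h2, gbinom_pascal]
    ring
  rw [Finset.sum_add_distrib] at hS
  linear_combination hS

lemma lagA (k : ℕ) (α w : ℂ) :
    ((k:ℂ)+1) * lag (k+1) α w + w * lag k (α+1) w = ((k:ℂ)+1+α) * lag k α w := by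
  simp only [lag]
  push_cast
  have e2 : (k:ℂ) + α = ((k:ℂ)+1+α) - 1 := by ring
  have e3 : (k:ℂ) + (α+1) = ((k:ℂ)+1+α) := by ring
  rw [e2, e3]
  set x : ℂ := (k:ℂ) + 1 + α with hx
  rw [Finset.mul_sum, Finset.mul_sum, Finset.mul_sum]
  conv_lhs => rw [Finset.sum_range_succ']
  conv_rhs => rw [Finset.sum_range_succ']
  have h0 : ((k:ℂ) + 1) * ((-1:ℂ) ^ 0 * gbinom x (k + 1 - 0) * w ^ 0 / ((Nat.factorial 0 : ℕ) : ℂ))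
      = x * ((-1:ℂ) ^ 0 * gbinom (x - 1) (k - 0) * w ^ 0 / ((Nat.factorial 0 : ℕ) : ℂ)) := by
    simp only [pow_zero, Nat.sub_zero, Nat.factorial_zero, Nat.cast_one, div_one, one_mul, mul_one]
    exact gbinom_succ_mul x k
  have hsum : ∑ j ∈ Finset.range (k+1),
      (((k:ℂ) + 1) * ((-1:ℂ) ^ (j + 1) * gbinom x (k + 1 - (j + 1)) * w ^ (j + 1) / (((j + 1).factorial : ℕ) : ℂ))
       + w * ((-1:ℂ) ^ j * gbinom x (k - j) * w ^ j / ((j.factorial : ℕ) : ℂ)))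
      = ∑ j ∈ Finset.range k,
        x * ((-1:ℂ) ^ (j + 1) * gbinom (x - 1) (k - (j + 1)) * w ^ (j + 1) / (((j + 1).factorial : ℕ) : ℂ)) := by
    rw [Finset.sum_range_succ]
    have hz : ((k:ℂ) + 1) * ((-1:ℂ) ^ (k + 1) * gbinom x (k + 1 - (k + 1)) * w ^ (k + 1) / (((k + 1).factorial : ℕ) : ℂ))
        + w * ((-1:ℂ) ^ k * gbinom x (k - k) * w ^ k / ((k.factorial : ℕ) : ℂ)) = 0 := by
      rw [show k + 1 - (k + 1) = 0 from by omega, Nat.sub_self, gbinom_zero, fac_succ_cast]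
      have hk : (k.factorial : ℂ) ≠ 0 := Nat.cast_ne_zero.mpr k.factorial_ne_zero
      have hk1 : ((k:ℂ)+1) ≠ 0 := Nat.cast_add_one_ne_zero k
      field_simp
      ring
    rw [hz, add_zero]
    refine Finset.sum_congr rfl ?_
    intro j hj
    have hjk : j < k := Finset.mem_range.mp hj
    have key := gbinom_succ_mul x (k - j - 1)
    have hc : ((k - j - 1 : ℕ) : ℂ) = (k:ℂ) - (j:ℂ) - 1 := by
      have h1 : k - j - 1 = k - (j + 1) := by omega
      have h2 : j + 1 ≤ k := hjk
      rw [h1, Nat.cast_sub h2]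
      push_cast
      ring
    rw [hc, show (k - j - 1) + 1 = k - j from by omega] at key
    rw [show k + 1 - (j + 1) = k - j from by omega,
        show k - (j + 1) = k - j - 1 from by omega,
        fac_succ_cast]
    have hjf : ((j.factorial : ℕ) : ℂ) ≠ 0 := Nat.cast_ne_zero.mpr j.factorial_ne_zero
    have hj1 : ((j:ℂ)+1) ≠ 0 := Nat.cast_add_one_ne_zero j
    field_simp
    linear_combination ((-1:ℂ)^(j+1) * w^(j+1)) * key
  rw [Finset.sum_add_distrib] at hsum
  linear_combination h0 + hsum

theorem continued_fraction_denominators_are_laguerre (s z : ℂ) (q : ℕ → ℂ)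
    (h0 : q 0 = 1) (h1 : q 1 = z)
    (heven : ∀ k, 2 ≤ k → k % 2 = 0 → q k = ((k : ℂ) / 2 - s) * q (k - 2) + q (k - 1))
    (hodd : ∀ k, 2 ≤ k → k % 2 = 1 → q k = (((k : ℂ) - 1) / 2) * q (k - 2) + z * q (k - 1)) :
    ∀ k : ℕ, q (2 * k) = (k.factorial : ℂ) * lag k (-s) (-z) ∧
      q (2 * k + 1) = (k.factorial : ℂ) * z * lag k (1 - s) (-z) := by
  intro k
  induction k with
  | zero =>
    constructor
    · simpa [lag_zero] using h0
    · simpa [lag_zero] using h1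
  | succ k ih =>
    obtain ⟨ih1, ih2⟩ := ih
    have hA := lagA k (-s) (-z)
    rw [show -s + 1 = 1 - s from by ring] at hA
    have hB := lagB k (-s) (-z)
    rw [show -s + 1 = 1 - s from by ring] at hB
    have e1 : q (2*k+2) = (((k+1).factorial : ℕ) : ℂ) * lag (k+1) (-s) (-z) := by
      have h2 := heven (2*k+2) (by omega) (by omega)
      rw [show 2*k+2-2 = 2*k from by omega, show 2*k+2-1 = 2*k+1 from by omega] at h2
      rw [h2, ih1, ih2, fac_succ_cast]
      push_cast
      linear_combination -((k.factorial : ℕ) : ℂ) * hA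
    have e2 : q (2*k+3) = (((k+1).factorial : ℕ) : ℂ) * z * lag (k+1) (1-s) (-z) := by
      have h3 := hodd (2*k+3) (by omega) (by omega)
      rw [show 2*k+3-2 = 2*k+1 from by omega, show 2*k+3-1 = 2*k+2 from by omega] at h3
      rw [h3, ih2, e1, fac_succ_cast]
      push_cast
      linear_combination -(((k:ℂ)+1) * ((k.factorial : ℕ) : ℂ) * z) * hB
    constructor
    · rw [show 2*(k+1) = 2*k+2 from by ring]
      exact e1
    · rw [show 2*(k+1)+1 = 2*k+3 from by ring]
      exact e2
end
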